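/- Let E be the Banach algebra of continuous ℂ-linear endomorphisms of the space of n×n complex matrices, let A ∈ E, and suppose exp(t A) converges to some Λ ∈ E as t → +∞ (t real). Then the function t ↦ exp(t A) − Λ is Bochner integrable on [0, ∞), and A∘(∫_0^∞ (exp(t A) − Λ) dt) = Λ − 1. -/

import Mathlib

open Filter MeasureTheory

attribute [local instance] Matrix.linftyOpNormedAddCommGroup Matrix.linftyOpNormedSpace

open NormedSpace in
theorem stmt12_aux {𝔸 : Type*} [NormedRing 𝔸] [NormedAlgebra ℝ 𝔸] [CompleteSpace 𝔸]
    (A Λ : 𝔸) (hΛ : Tendsto (fun t : ℝ => exp (t • A)) atTop (nhds Λ)) :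
    IntegrableOn (fun t : ℝ => exp (t • A) - Λ) (Set.Ici 0) ∧
      A * (∫ t in Set.Ici (0:ℝ), (exp (t • A) - Λ)) = Λ - 1 := by
  set g : ℝ → 𝔸 := fun t => exp (t • A) - Λ with hgdef
  -- semigroup law for exp
  have hexp_add : ∀ s t : ℝ, exp ((s + t) • A) = exp (s • A) * exp (t • A) := by
    intro s t
    rw [add_smul]
    let +nondep : NormedAlgebra ℚ 𝔸 := NormedAlgebra.restrictScalars ℚ ℝ 𝔸
    exact exp_add_of_commute (((Commute.refl A).smul_left s).smul_right t)
  -- exp (s A) * Λ = Λ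
  have hΛmul : ∀ s : ℝ, exp (s • A) * Λ = Λ := by
    intro s
    have h1 : Tendsto (fun t : ℝ => exp (s • A) * exp (t • A)) atTop
        (nhds (exp (s • A) * Λ)) := hΛ.const_mul _
    have h2 : Tendsto (fun t : ℝ => exp (s • A) * exp (t • A)) atTop (nhds Λ) := by
      have := hΛ.comp (tendsto_atTop_add_const_left atTop s tendsto_id)
      simpa [Function.comp_def, hexp_add] using this
    exact tendsto_nhds_unique h1 h2
  -- Λ * exp (s A) = Λ
  have hmulΛ : ∀ s : ℝ, Λ * exp (s • A) = Λ := by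
    intro s
    have h1 : Tendsto (fun t : ℝ => exp (t • A) * exp (s • A)) atTop
        (nhds (Λ * exp (s • A))) := hΛ.mul_const _
    have h2 : Tendsto (fun t : ℝ => exp (t • A) * exp (s • A)) atTop (nhds Λ) := by
      have := hΛ.comp (tendsto_atTop_add_const_right atTop s tendsto_id)
      simpa [Function.comp_def, hexp_add] using this
    exact tendsto_nhds_unique h1 h2
  -- Λ is idempotent
  have hΛΛ : Λ * Λ = Λ := by
    have h1 : Tendsto (fun t : ℝ => exp (t • A) * Λ) atTop (nhds (Λ * Λ)) := hΛ.mul_const _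
    have h2 : Tendsto (fun t : ℝ => exp (t • A) * Λ) atTop (nhds Λ) := by
      simp only [hΛmul]; exact tendsto_const_nhds (x := Λ) (f := atTop (α := ℝ))
    exact tendsto_nhds_unique h1 h2
  -- semigroup law for g
  have hg : ∀ s t : ℝ, g (s + t) = g s * g t := by
    intro s t
    simp only [hgdef]
    rw [sub_mul, mul_sub, mul_sub, hΛmul s, hmulΛ t, hΛΛ, ← hexp_add]
    abel
  -- g tends to 0
  have hg0 : Tendsto g atTop (nhds 0) := by
    simpa [hgdef, sub_self] using hΛ.sub_const Λ
  -- continuity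
  have hcont : Continuous g := by
    let +nondep : NormedAlgebra ℚ 𝔸 := NormedAlgebra.restrictScalars ℚ ℝ 𝔸
    exact (exp_continuous.comp (continuous_id.smul continuous_const)).sub continuous_const
  -- pick T ≥ 1 with ‖g T‖ ≤ 1/2
  have hev : ∀ᶠ t : ℝ in atTop, ‖g t‖ < 1 / 2 := by
    have := Metric.tendsto_nhds.mp hg0 (1 / 2) (by norm_num)
    simpa [dist_zero_right] using this
  obtain ⟨T, hT12, hT1⟩ := (hev.and (eventually_ge_atTop (1 : ℝ))).exists
  have hTpos : (0 : ℝ) < T := lt_of_lt_of_le one_pos hT1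
  have hgT : ‖g T‖ ≤ 1 / 2 := le_of_lt hT12
  -- bound on [0, T]
  obtain ⟨C, hC⟩ := (isCompact_Icc (a := (0:ℝ)) (b := T)).exists_bound_of_continuousOn
    hcont.continuousOn
  set C' : ℝ := max C 1 with hC'def
  have hC'1 : (1 : ℝ) ≤ C' := le_max_right _ _
  have hC'0 : (0 : ℝ) ≤ C' := le_trans zero_le_one hC'1
  have hCbound : ∀ t : ℝ, 0 ≤ t → t ≤ T → ‖g t‖ ≤ C' := fun t h1 h2 =>
    le_trans (hC t ⟨h1, h2⟩) (le_max_left _ _)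
  -- geometric decay
  have key : ∀ k : ℕ, ∀ t : ℝ, 0 ≤ t → t ≤ T → ‖g (t + k * T)‖ ≤ C' * (1 / 2) ^ k := by
    intro k
    induction k with
    | zero => intro t h1 h2; simpa using hCbound t h1 h2
    | succ k ih =>
      intro t h1 h2
      have heq : t + (k + 1 : ℕ) * T = (t + k * T) + T := by push_cast; ring
      rw [heq, hg]
      calc ‖g (t + k * T) * g T‖ ≤ ‖g (t + k * T)‖ * ‖g T‖ := norm_mul_le _ _
        _ ≤ (C' * (1 / 2) ^ k) * (1 / 2) := by
            apply mul_le_mul (ih t h1 h2) hgT (norm_nonneg _)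
            positivity
        _ = C' * (1 / 2) ^ (k + 1) := by ring
  -- exponential bound
  set c : ℝ := Real.log 2 / T with hcdef
  have hc : 0 < c := div_pos (Real.log_pos one_lt_two) hTpos
  have hbound : ∀ t : ℝ, 0 ≤ t → ‖g t‖ ≤ (2 * C') * Real.exp (-c * t) := by
    intro t ht
    set k : ℕ := ⌊t / T⌋₊ with hkdef
    have hdiv0 : 0 ≤ t / T := div_nonneg ht hTpos.le
    have hk1 : (k : ℝ) * T ≤ t := by
      rw [← le_div_iff₀ hTpos]; exact Nat.floor_le hdiv0
    have hk2 : t < ((k : ℝ) + 1) * T := by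
      rw [← div_lt_iff₀ hTpos]; exact Nat.lt_floor_add_one _
    have h1 : ‖g t‖ ≤ C' * (1 / 2) ^ k := by
      have := key k (t - k * T) (by linarith) (by nlinarith)
      simpa [sub_add_cancel] using this
    have h2 : ((1 : ℝ) / 2) ^ k ≤ 2 * Real.exp (-c * t) := by
      have hrpow : ((1 : ℝ) / 2) ^ (k : ℝ) ≤ ((1 : ℝ) / 2) ^ (t / T - 1 : ℝ) := by
        apply Real.rpow_le_rpow_of_exponent_ge (by norm_num) (by norm_num)
        have : t / T < (k : ℝ) + 1 := by
          rw [div_lt_iff₀ hTpos]; linarith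
        linarith
      rw [Real.rpow_natCast] at hrpow
      refine hrpow.trans_eq ?_
      rw [Real.rpow_def_of_pos (by norm_num : (0:ℝ) < 1/2)]
      rw [show Real.log (1 / 2) = -Real.log 2 by
        rw [one_div, Real.log_inv]]
      rw [show -Real.log 2 * (t / T - 1) = Real.log 2 + (-c * t) by
        rw [hcdef]; field_simp; ring]
      rw [Real.exp_add, Real.exp_log two_pos]
    calc ‖g t‖ ≤ C' * (1 / 2) ^ k := h1
      _ ≤ C' * (2 * Real.exp (-c * t)) := by
          apply mul_le_mul_of_nonneg_left h2 hC'0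
      _ = (2 * C') * Real.exp (-c * t) := by ring
  -- integrability
  have hdom : IntegrableOn (fun t : ℝ => (2 * C') * Real.exp (-c * t)) (Set.Ici 0) := by
    rw [integrableOn_Ici_iff_integrableOn_Ioi]
    exact (exp_neg_integrableOn_Ioi 0 hc).const_mul _
  have hInt : IntegrableOn g (Set.Ici 0) := by
    apply Integrable.mono' hdom (hcont.aestronglyMeasurable.restrict)
    exact (ae_restrict_mem measurableSet_Ici).mono fun t ht => hbound t ht
  refine ⟨hInt, ?_⟩
  -- A * Λ = 0
  have hAΛ : A * Λ = 0 := by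
    have h1 : HasDerivAt (fun s : ℝ => exp (s • A) * Λ)
        ((A * exp ((0:ℝ) • A)) * Λ) 0 := (hasDerivAt_exp_smul_const' A (0:ℝ)).mul_const Λ
    have h2 : (fun s : ℝ => exp (s • A) * Λ) = fun _ => Λ := funext hΛmul
    rw [h2] at h1
    have h3 := h1.unique (hasDerivAt_const 0 Λ)
    simpa [zero_smul, exp_zero] using h3
  -- derivative of g
  have hderiv : ∀ t : ℝ, HasDerivAt g (A * g t) t := by
    intro t
    have hd : HasDerivAt (fun u : ℝ => exp (u • A)) (A * exp (t • A)) t :=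
      hasDerivAt_exp_smul_const' A t
    have : A * exp (t • A) = A * g t := by
      simp only [hgdef]; rw [mul_sub, hAΛ, sub_zero]
    rw [this] at hd
    exact hd.sub_const Λ
  have hcontAg : Continuous fun t : ℝ => A * g t := continuous_const.mul hcont
  -- FTC on [0, R]
  have hFTC : ∀ R : ℝ, ∫ t in (0:ℝ)..R, A * g t = g R - g 0 := by
    intro R
    exact intervalIntegral.integral_eq_sub_of_hasDerivAt
      (fun t _ => hderiv t) (hcontAg.intervalIntegrable 0 R)
  -- integrability of A * g on Ioi 0
  have hIntAg : IntegrableOn (fun t : ℝ => A * g t) (Set.Ioi 0) := by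
    have : IntegrableOn (fun t : ℝ => A * g t) (Set.Ici 0) := by
      have := (ContinuousLinearMap.mul ℝ 𝔸 A).integrable_comp hInt
      simpa [IntegrableOn] using this
    exact this.mono_set Set.Ioi_subset_Ici_self
  have hlim1 : Tendsto (fun R : ℝ => ∫ t in (0:ℝ)..R, A * g t) atTop
      (nhds (∫ t in Set.Ioi (0:ℝ), A * g t)) :=
    intervalIntegral_tendsto_integral_Ioi 0 hIntAg tendsto_id
  have hlim2 : Tendsto (fun R : ℝ => ∫ t in (0:ℝ)..R, A * g t) atTop (nhds (Λ - 1)) := by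
    have h4 : Tendsto (fun R : ℝ => g R - g 0) atTop (nhds (0 - g 0)) := hg0.sub_const _
    have hg0val : g 0 = 1 - Λ := by simp [hgdef, zero_smul, exp_zero]
    have : (0 : 𝔸) - g 0 = Λ - 1 := by rw [hg0val]; abel
    rw [this] at h4
    simpa only [hFTC] using h4
  have hIoi : ∫ t in Set.Ioi (0:ℝ), A * g t = Λ - 1 := tendsto_nhds_unique hlim1 hlim2
  -- pull A out of the integral
  have hpull : A * (∫ t in Set.Ici (0:ℝ), g t) = ∫ t in Set.Ici (0:ℝ), A * g t := by
    have := (ContinuousLinearMap.mul ℝ 𝔸 A).integral_comp_comm hInt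
    simpa using this.symm
  calc A * (∫ t in Set.Ici (0:ℝ), g t) = ∫ t in Set.Ici (0:ℝ), A * g t := hpull
    _ = ∫ t in Set.Ioi (0:ℝ), A * g t := by rw [integral_Ici_eq_integral_Ioi]
    _ = Λ - 1 := hIoi

/-- if `e^{t A} → Λ` as `t → +∞` then `t ↦ e^{t A} - Λ` is Bochner
integrable on `[0, ∞)` and `A ∘ ∫_0^∞ (e^{t A} - Λ) dt = Λ - 1`. -/
theorem stmt12 (n : ℕ)
    (A Λ : @ContinuousLinearMap ℂ ℂ _ _ (RingHom.id ℂ) (Matrix (Fin n) (Fin n) ℂ)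
      (@UniformSpace.toTopologicalSpace _ (@PseudoMetricSpace.toUniformSpace _ SeminormedAddCommGroup.toPseudoMetricSpace)) _
      (Matrix (Fin n) (Fin n) ℂ)
      (@UniformSpace.toTopologicalSpace _ (@PseudoMetricSpace.toUniformSpace _ SeminormedAddCommGroup.toPseudoMetricSpace)) _ _ _)
    (hΛ : Tendsto (fun t : ℝ => NormedSpace.exp (t • A)) atTop (nhds Λ)) :
    IntegrableOn (fun t : ℝ => NormedSpace.exp (t • A) - Λ) (Set.Ici 0) ∧
      A * (∫ t in Set.Ici (0:ℝ), (NormedSpace.exp (t • A) - Λ)) = Λ - 1 := by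
  exact stmt12_aux A Λ hΛ
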